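/- Let s be an odd prime power, F = GF(s), C₀ the nonzero squares, and δ ∈ C₁ a nonzero non-square. If (s-1)/2 is even, then for every nonzero u ∈ F, the total number of pairs (x,y) ∈ C₀ × C₀ with (δ-1)x = u plus the number of pairs with (δ⁻¹-1)y = u equals exactly 1. (Here (δ-1)C₀ and (δ⁻¹-1)C₀ lie in different cosets of C₀, so together they cover F* exactly once.) -/

import Mathlib

/-- if `(s-1)/2` is even and `δ` is a nonzero non-square, then for every
nonzero `u`, the number of `x ∈ C₀` with `(δ-1)x = u` plus the number of `y ∈ C₀` with
`(δ⁻¹-1)y = u` equals exactly `1`. -/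
theorem stmt4 (F : Type*) [Field F] [Fintype F]
    (hodd : Odd (Fintype.card F)) (heven : Even ((Fintype.card F - 1) / 2))
    (C0 : Set F) (hC0 : C0 = {x : F | x ≠ 0 ∧ IsSquare x})
    (δ : F) (hδ0 : δ ≠ 0) (hδ : ¬ IsSquare δ)
    (u : F) (hu : u ≠ 0) :
    {x : F | x ∈ C0 ∧ (δ - 1) * x = u}.ncard
      + {y : F | y ∈ C0 ∧ (δ⁻¹ - 1) * y = u}.ncard = 1 := by
  classical
  have hcard : Fintype.card F % 4 = 1 := by
    obtain ⟨m, hm⟩ := hodd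
    obtain ⟨k, hk⟩ := heven
    omega
  have hm1 : IsSquare (-1 : F) := by
    rw [FiniteField.isSquare_neg_one_iff]
    omega
  have hδ1 : δ ≠ 1 := fun h => hδ (h ▸ IsSquare.one)
  have ha0 : δ - 1 ≠ 0 := sub_ne_zero.mpr hδ1
  have hδi0 : δ⁻¹ ≠ 0 := inv_ne_zero hδ0
  have hb0 : δ⁻¹ - 1 ≠ 0 := fun h => hδ1 (by
    have h1 : δ⁻¹ = 1 := by rwa [sub_eq_zero] at h
    rwa [inv_eq_one] at h1)
  have h1δ : (1 : F) - δ ≠ 0 := fun h => ha0 (by linear_combination -h)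
  set a : F := u * (δ - 1)⁻¹ with hadef
  set b : F := u * (δ⁻¹ - 1)⁻¹ with hbdef
  clear_value a b
  have haa : a ≠ 0 := by rw [hadef]; exact mul_ne_zero hu (inv_ne_zero ha0)
  have hbb : b ≠ 0 := by rw [hbdef]; exact mul_ne_zero hu (inv_ne_zero hb0)
  have hb2 : b = a * (-δ) := by
    rw [hbdef, hadef]
    field_simp [h1δ]
    ring
  have hnδ : ¬ IsSquare (-δ : F) := by
    intro h
    apply hδ
    have : IsSquare ((-1 : F) * (-δ)) := hm1.mul h
    rwa [neg_mul_neg, one_mul] at this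
  have hχ : quadraticChar F a * quadraticChar F b = -1 := by
    rw [hb2, map_mul, quadraticChar_neg_one_iff_not_isSquare.mpr hnδ]
    have := quadraticChar_sq_one haa
    nlinarith [this]
  have key : ∀ x : F, (δ - 1) * x = u → x = a := by
    intro x h2
    rw [hadef, eq_mul_inv_iff_mul_eq₀ ha0]
    linear_combination h2
  have key2 : ∀ y : F, (δ⁻¹ - 1) * y = u → y = b := by
    intro y h2
    rw [hbdef, eq_mul_inv_iff_mul_eq₀ hb0]
    linear_combination h2
  have keya : (δ - 1) * a = u := by
    rw [hadef, mul_comm u, ← mul_assoc, mul_inv_cancel₀ ha0, one_mul]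
  have keyb : (δ⁻¹ - 1) * b = u := by
    rw [hbdef, mul_comm u, ← mul_assoc, mul_inv_cancel₀ hb0, one_mul]
  rcases quadraticChar_dichotomy haa with h | h
  · have hsa : IsSquare a := (quadraticChar_one_iff_isSquare haa).mp h
    have hnb : ¬ IsSquare b := by
      rw [← quadraticChar_neg_one_iff_not_isSquare]
      rw [h, one_mul] at hχ; exact hχ
    have e1 : {x : F | x ∈ C0 ∧ (δ - 1) * x = u} = {a} := by
      ext x
      simp only [hC0, Set.mem_setOf_eq, Set.mem_singleton_iff]
      exact ⟨fun ⟨_, h2⟩ => key x h2, fun hx => hx ▸ ⟨⟨haa, hsa⟩, keya⟩⟩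
    have e2 : {y : F | y ∈ C0 ∧ (δ⁻¹ - 1) * y = u} = ∅ := by
      ext y
      simp only [hC0, Set.mem_setOf_eq, Set.mem_empty_iff_false, iff_false, not_and]
      rintro ⟨hy0, hy⟩ h2
      exact hnb (key2 y h2 ▸ hy)
    rw [e1, e2]; simp
  · have hna : ¬ IsSquare a := quadraticChar_neg_one_iff_not_isSquare.mp h
    have hsb : IsSquare b := by
      rw [h] at hχ
      rw [← quadraticChar_one_iff_isSquare hbb]
      omega
    have e1 : {x : F | x ∈ C0 ∧ (δ - 1) * x = u} = ∅ := by
      ext x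
      simp only [hC0, Set.mem_setOf_eq, Set.mem_empty_iff_false, iff_false, not_and]
      rintro ⟨hx0, hx⟩ h2
      exact hna (key x h2 ▸ hx)
    have e2 : {y : F | y ∈ C0 ∧ (δ⁻¹ - 1) * y = u} = {b} := by
      ext y
      simp only [hC0, Set.mem_setOf_eq, Set.mem_singleton_iff]
      exact ⟨fun ⟨_, h2⟩ => key2 y h2, fun hy => hy ▸ ⟨⟨hbb, hsb⟩, keyb⟩⟩
    rw [e1, e2]; simp
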